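/- Let (P_θ)_{θ∈Θ} be a statistical model on a sample space Ω, let Q be a probability measure on Θ, and let T be the joint probability measure on Ω × Θ defined by T(A×B) = ∫_B P_θ(A) Q(dθ). Then a measurable function f : Ω × Θ → [0,∞] is an e-function w.r.t. T if and only if there exist a conditional e-function g w.r.t. the model (P_θ) and an e-function h w.r.t. Q such that f(ω,θ) = g(ω;θ)·h(θ) for T-almost every (ω,θ). -/

import Mathlib

open MeasureTheory ProbabilityTheory
open scoped ENNReal

/-- for the Bayesian model given by a statistical model (Markov kernel)
`(P_θ)_{θ∈Θ}` and a prior probability measure `Q` on `Θ`, with joint probability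
measure `T` on `Ω × Θ` (so `T(A×B) = ∫_B P_θ(A) Q(dθ)`, obtained here as the
swap-pushforward of the composition-product `Q ⊗ₘ P`), a measurable function
`f : Ω × Θ → [0,∞]` is an e-function w.r.t. `T` iff `f = g·h` `T`-a.e. for some
conditional e-function `g` w.r.t. `(P_θ)` and some e-function `h` w.r.t. `Q`. -/
theorem stmt5 {Ω Θ : Type*} [MeasurableSpace Ω] [MeasurableSpace Θ]
    (P : Kernel Θ Ω) [IsMarkovKernel P]
    (Q : Measure Θ) [IsProbabilityMeasure Q]
    (f : Ω × Θ → ℝ≥0∞) (hf : Measurable f) :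
    ∫⁻ x, f x ∂((Q.compProd P).map Prod.swap) ≤ 1 ↔
      ∃ g : Ω × Θ → ℝ≥0∞, ∃ h : Θ → ℝ≥0∞,
        Measurable g ∧ (∀ θ, ∫⁻ ω, g (ω, θ) ∂(P θ) ≤ 1) ∧
        Measurable h ∧ (∫⁻ θ, h θ ∂Q ≤ 1) ∧
        (∀ᵐ x ∂((Q.compProd P).map Prod.swap), f x = g x * h x.2) := by
  have hswap : Measurable (Prod.swap : Θ × Ω → Ω × Θ) := measurable_swap
  have hfs : Measurable (f ∘ Prod.swap : Θ × Ω → ℝ≥0∞) := hf.comp hswap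
  constructor
  · intro hT
    set h : Θ → ℝ≥0∞ := fun θ => ∫⁻ ω, f (ω, θ) ∂(P θ) with hh
    have hmeas : Measurable h := by
      have : Measurable (Function.uncurry (fun θ ω => f (ω, θ))) := hfs
      exact Measurable.lintegral_kernel_prod_right this
    have hfs' : Measurable fun a : Θ × Ω => f a.swap := hf.comp hswap
    have hint : ∫⁻ θ, h θ ∂Q ≤ 1 := by
      rw [lintegral_map hf hswap, Measure.lintegral_compProd hfs'] at hT
      simpa using hT
    set g : Ω × Θ → ℝ≥0∞ := fun x => f x / h x.2 with hg
    have hgm : Measurable g := hf.div (hmeas.comp measurable_snd)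
    refine ⟨g, h, hgm, ?_, hmeas, hint, ?_⟩
    · intro θ
      have hfθ : Measurable fun ω : Ω => f (ω, θ) := hf.comp (measurable_id.prodMk measurable_const)
      have hgθ : Measurable fun ω : Ω => g (ω, θ) := hgm.comp (measurable_id.prodMk measurable_const)
      by_cases h0 : h θ = 0
      · have hfz : ∀ᵐ ω ∂(P θ), f (ω, θ) = 0 := (lintegral_eq_zero_iff hfθ).mp h0
        have : ∫⁻ ω, g (ω, θ) ∂(P θ) = 0 := by
          rw [lintegral_eq_zero_iff hgθ]
          filter_upwards [hfz] with ω hω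
          simp [hg, hω]
        simp [this]
      by_cases hI : h θ = ∞
      · have : ∫⁻ ω, g (ω, θ) ∂(P θ) = 0 := by
          simp [hg, hI]
        simp [this]
      · have : ∫⁻ ω, g (ω, θ) ∂(P θ) = h θ / h θ := by
          simp only [hg, div_eq_mul_inv]
          rw [lintegral_mul_const' _ _ (by simp [h0])]
        rw [this, ENNReal.div_self h0 hI]
    · have hmul : Measurable fun x : Ω × Θ => g x * h x.2 := hgm.mul (hmeas.comp measurable_snd)
      have hmset : MeasurableSet {x : Ω × Θ | f x = g x * h x.2} :=
        measurableSet_eq_fun hf hmul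
      rw [ae_map_iff hswap.aemeasurable hmset]
      have : ∀ᵐ y ∂(Q.compProd P), f y.swap = g y.swap * h y.swap.2 := by
        rw [Measure.ae_compProd_iff]
        · have hfin : ∀ᵐ θ ∂Q, h θ ≠ ∞ := by
            have := ae_lt_top hmeas (lt_of_le_of_lt hint (by norm_num)).ne
            filter_upwards [this] with θ hθ using hθ.ne
          filter_upwards [hfin] with θ hθ
          by_cases h0 : h θ = 0
          · have hfz : ∀ᵐ ω ∂(P θ), f (ω, θ) = 0 :=
              (lintegral_eq_zero_iff (show Measurable fun ω : Ω => f (ω, θ) from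
                hf.comp (measurable_id.prodMk measurable_const))).mp h0
            filter_upwards [hfz] with ω hω
            simp [hg, hω, h0]
          · filter_upwards with ω
            simp only [hg, Prod.swap_prod_mk]
            rw [ENNReal.div_mul_cancel h0 hθ]
        · have hmul2 : Measurable fun y : Θ × Ω => g y.swap * h y.swap.2 := hmul.comp hswap
          exact measurableSet_eq_fun (hf.comp hswap) hmul2
      exact this
  · rintro ⟨g, h, hgm, hgP, hhm, hhQ, hae⟩
    have heq : ∫⁻ x, f x ∂((Q.compProd P).map Prod.swap)
        = ∫⁻ x, g x * h x.2 ∂((Q.compProd P).map Prod.swap) :=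
      lintegral_congr_ae hae
    have hm1 : Measurable fun x : Ω × Θ => g x * h x.2 := hgm.mul (hhm.comp measurable_snd)
    have hm2 : Measurable fun y : Θ × Ω => g y.swap * h y.swap.2 := hm1.comp hswap
    rw [heq, lintegral_map hm1 hswap, Measure.lintegral_compProd hm2]
    have : ∀ θ, ∫⁻ ω, g (ω, θ) * h θ ∂(P θ) ≤ h θ := by
      intro θ
      rw [lintegral_mul_const _ (show Measurable fun ω : Ω => g (ω, θ) from
        hgm.comp (measurable_id.prodMk measurable_const))]
      calc (∫⁻ ω, g (ω, θ) ∂(P θ)) * h θ ≤ 1 * h θ :=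
        mul_le_mul_left (hgP θ) _
      _ = h θ := one_mul _
    calc ∫⁻ θ, ∫⁻ ω, g ((θ, ω).swap) * h ((θ, ω).swap).2 ∂(P θ) ∂Q
        ≤ ∫⁻ θ, h θ ∂Q := lintegral_mono fun θ => by simpa using this θ
      _ ≤ 1 := hhQ
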